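/- Let R = 2k be an even positive integer, let θ₁,…,θ_k and φ₁,…,φ_k be real angles, and normalize by 1/√2. For complex numbers u, v on the unit circle define the codeword C(u,v) = (1/√2)·diag(M(e^{iθ₁}u, e^{iφ₁}v), …, M(e^{iθ_k}u, e^{iφ_k}v)). Then: (a) C(u,v) is unitary for every u, v with |u| = |v| = 1; and (b) for any u, v, u′, v′ on the unit circle with (u,v) ≠ (u′,v′), the difference C(u,v) − C(u′,v′) is invertible. -/

import Mathlib

open Matrix

/-- The Alamouti block: the 2×2 complex matrix with rows `(s, -conj t)` and `(t, conj s)`. -/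
def alamouti (s t : ℂ) : Matrix (Fin 2) (Fin 2) ℂ :=
  !![s, -(starRingEnd ℂ) t; t, (starRingEnd ℂ) s]

lemma alamouti_mul_left (s t : ℂ) :
    (alamouti s t)ᴴ * alamouti s t
      = (s * (starRingEnd ℂ) s + t * (starRingEnd ℂ) t) • 1 := by
  ext i j
  fin_cases i <;> fin_cases j <;>
    simp [alamouti, Matrix.mul_apply, Fin.sum_univ_two, Matrix.one_apply] <;> ring

lemma alamouti_mul_right (s t : ℂ) :
    alamouti s t * (alamouti s t)ᴴ
      = (s * (starRingEnd ℂ) s + t * (starRingEnd ℂ) t) • 1 := by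
  ext i j
  fin_cases i <;> fin_cases j <;>
    simp [alamouti, Matrix.mul_apply, Fin.sum_univ_two, Matrix.one_apply] <;> ring

lemma alamouti_sub (s t s' t' : ℂ) :
    alamouti s t - alamouti s' t' = alamouti (s - s') (t - t') := by
  ext i j
  fin_cases i <;> fin_cases j <;> simp [alamouti] <;> ring

lemma alamouti_det (s t : ℂ) :
    (alamouti s t).det = s * (starRingEnd ℂ) s + t * (starRingEnd ℂ) t := by
  simp [alamouti, Matrix.det_fin_two_of]; ring

/-- The 2-group decodable PCIOD codeword for symbols `u, v` on the unit circle with rotation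
angles `θᵢ, φᵢ`, scaled by `1/√2`. -/
noncomputable def pciodCodeword (k : ℕ) (θ φ : Fin k → ℝ) (u v : ℂ) :
    Matrix (Fin 2 × Fin k) (Fin 2 × Fin k) ℂ :=
  ((1 / Real.sqrt 2 : ℝ) : ℂ) •
    Matrix.blockDiagonal fun i =>
      alamouti (Complex.exp (θ i * Complex.I) * u) (Complex.exp (φ i * Complex.I) * v)

lemma norm_fact (w : ℂ) (hw : ‖w‖ = 1) (a : ℝ) :
    (Complex.exp (a * Complex.I) * w) * (starRingEnd ℂ) (Complex.exp (a * Complex.I) * w) = 1 := by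
  rw [Complex.mul_conj]
  norm_cast
  rw [Complex.normSq_eq_norm_sq]
  simp [Complex.norm_exp_ofReal_mul_I, hw]

/-- (a) Each codeword `C(u,v)` with `|u| = |v| = 1` is unitary, and (b) the difference of two
distinct codewords is invertible (full diversity). -/
theorem pciod_code_unitary_and_fully_diverse (k : ℕ) (hk : 0 < k) (θ φ : Fin k → ℝ) :
    (∀ u v : ℂ, ‖u‖ = 1 → ‖v‖ = 1 →
        (pciodCodeword k θ φ u v)ᴴ * pciodCodeword k θ φ u v = 1 ∧
        pciodCodeword k θ φ u v * (pciodCodeword k θ φ u v)ᴴ = 1) ∧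
      (∀ u v u' v' : ℂ, ‖u‖ = 1 → ‖v‖ = 1 →
        ‖u'‖ = 1 → ‖v'‖ = 1 → (u, v) ≠ (u', v') →
        IsUnit (pciodCodeword k θ φ u v - pciodCodeword k θ φ u' v')) := by
  have hc : (((1 / Real.sqrt 2 : ℝ) : ℂ)) * ((1 / Real.sqrt 2 : ℝ) : ℂ) = 1 / 2 := by
    norm_cast
    rw [div_mul_div_comm, Real.mul_self_sqrt (by norm_num)]
    norm_num
  constructor
  · intro u v hu hv
    have key : ∀ i : Fin k,
        (alamouti (Complex.exp (θ i * Complex.I) * u) (Complex.exp (φ i * Complex.I) * v))ᴴ *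
          alamouti (Complex.exp (θ i * Complex.I) * u) (Complex.exp (φ i * Complex.I) * v)
          = (2 : ℂ) • 1 ∧
        alamouti (Complex.exp (θ i * Complex.I) * u) (Complex.exp (φ i * Complex.I) * v) *
          (alamouti (Complex.exp (θ i * Complex.I) * u) (Complex.exp (φ i * Complex.I) * v))ᴴ
          = (2 : ℂ) • 1 := by
      intro i
      rw [alamouti_mul_left, alamouti_mul_right, norm_fact u hu, norm_fact v hv]
      norm_num
    constructor
    · rw [pciodCodeword, Matrix.conjTranspose_smul, Matrix.smul_mul, Matrix.mul_smul,
        Matrix.blockDiagonal_conjTranspose, ← Matrix.blockDiagonal_mul, smul_smul]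
      simp only [Complex.star_def, Complex.conj_ofReal]
      have : (Matrix.blockDiagonal fun i =>
          (alamouti (Complex.exp (θ i * Complex.I) * u) (Complex.exp (φ i * Complex.I) * v))ᴴ *
          alamouti (Complex.exp (θ i * Complex.I) * u) (Complex.exp (φ i * Complex.I) * v))
          = (2 : ℂ) • (1 : Matrix (Fin 2 × Fin k) (Fin 2 × Fin k) ℂ) := by
        rw [show (1 : Matrix (Fin 2 × Fin k) (Fin 2 × Fin k) ℂ) = Matrix.blockDiagonal fun _ => 1
            from (Matrix.blockDiagonal_one).symm, ← Matrix.blockDiagonal_smul]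
        exact congrArg _ (funext fun i => (key i).1)
      rw [this, smul_smul, hc]
      norm_num
    · rw [pciodCodeword, Matrix.conjTranspose_smul, Matrix.smul_mul, Matrix.mul_smul,
        Matrix.blockDiagonal_conjTranspose, ← Matrix.blockDiagonal_mul, smul_smul]
      simp only [Complex.star_def, Complex.conj_ofReal]
      have : (Matrix.blockDiagonal fun i =>
          alamouti (Complex.exp (θ i * Complex.I) * u) (Complex.exp (φ i * Complex.I) * v) *
          (alamouti (Complex.exp (θ i * Complex.I) * u) (Complex.exp (φ i * Complex.I) * v))ᴴ)
          = (2 : ℂ) • (1 : Matrix (Fin 2 × Fin k) (Fin 2 × Fin k) ℂ) := by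
        rw [show (1 : Matrix (Fin 2 × Fin k) (Fin 2 × Fin k) ℂ) = Matrix.blockDiagonal fun _ => 1
            from (Matrix.blockDiagonal_one).symm, ← Matrix.blockDiagonal_smul]
        exact congrArg _ (funext fun i => (key i).2)
      rw [this, smul_smul, hc]
      norm_num
  · intro u v u' v' hu hv hu' hv' hne
    have hdiff : pciodCodeword k θ φ u v - pciodCodeword k θ φ u' v'
        = ((1 / Real.sqrt 2 : ℝ) : ℂ) • Matrix.blockDiagonal fun i =>
            alamouti (Complex.exp (θ i * Complex.I) * (u - u'))
              (Complex.exp (φ i * Complex.I) * (v - v')) := by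
      rw [pciodCodeword, pciodCodeword, ← smul_sub, ← Matrix.blockDiagonal_sub]
      have hfun : ((fun i => alamouti (Complex.exp (θ i * Complex.I) * u)
            (Complex.exp (φ i * Complex.I) * v)) - fun i =>
            alamouti (Complex.exp (θ i * Complex.I) * u')
              (Complex.exp (φ i * Complex.I) * v'))
          = fun i : Fin k => alamouti (Complex.exp (θ i * Complex.I) * (u - u'))
              (Complex.exp (φ i * Complex.I) * (v - v')) := by
        funext i
        rw [Pi.sub_apply, alamouti_sub, mul_sub, mul_sub]
      rw [hfun]
    rw [hdiff, Matrix.isUnit_iff_isUnit_det, isUnit_iff_ne_zero, Matrix.det_smul,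
      Matrix.det_blockDiagonal]
    apply mul_ne_zero
    · apply pow_ne_zero
      rw [Complex.ofReal_ne_zero]
      positivity
    · apply Finset.prod_ne_zero_iff.mpr
      intro i _
      rw [alamouti_det, Complex.mul_conj, Complex.mul_conj, ← Complex.ofReal_add]
      rw [Complex.ofReal_ne_zero]
      have h2 : u - u' ≠ 0 ∨ v - v' ≠ 0 := by
        by_contra h
        push_neg at h
        exact hne (Prod.ext (by linear_combination h.1) (by linear_combination h.2))
      have e1 : Complex.exp (θ i * Complex.I) ≠ 0 := Complex.exp_ne_zero _
      have e2 : Complex.exp (φ i * Complex.I) ≠ 0 := Complex.exp_ne_zero _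
      rcases h2 with h | h
      · exact ne_of_gt (add_pos_of_pos_of_nonneg
          (Complex.normSq_pos.mpr (mul_ne_zero e1 h)) (Complex.normSq_nonneg _))
      · exact ne_of_gt (add_pos_of_nonneg_of_pos
          (Complex.normSq_nonneg _) (Complex.normSq_pos.mpr (mul_ne_zero e2 h)))
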